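/- The map sending a standard type B partition π of ⟨n⟩ to the word w(π) = a_0 a_1 a_1^* ... a_n a_n^*, where a_0 = 0, a_i = a_i^* = 0 iff i ∈ S_0, a_i = -j and a_i^* = j iff i ∈ S_{2j}, and a_i = j and a_i^* = -j iff i ∈ S_{2j-1}, is a bijection between standard type B partitions of ⟨n⟩ with 2k+1 blocks and signed restricted growth functions of length 2n+1 with maximal letter k. -/

import Mathlib

open Finset Polynomial

/-- The ground set ⟨n⟩ = {-n, ..., -1, 0, 1, ..., n}. -/
noncomputable def angleB (n : ℕ) : Finset ℤ := Finset.Icc (-(n : ℤ)) (n : ℤ)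

/-- An ordered type B (signed) partition of ⟨n⟩ with 2k+1 blocks:
pairwise disjoint nonempty blocks covering ⟨n⟩, with 0 ∈ S₀, S₀ closed under
negation, and S_{2i} = -S_{2i-1} for i ≥ 1. -/
def IsOrderedB (n k : ℕ) (S : Fin (2*k+1) → Finset ℤ) : Prop :=
  (∀ i, (S i).Nonempty) ∧
  (∀ i j, i ≠ j → Disjoint (S i) (S j)) ∧
  (Finset.univ.biUnion S = angleB n) ∧
  ((0 : ℤ) ∈ S 0) ∧
  (∀ x ∈ S 0, -x ∈ S 0) ∧
  (∀ i : ℕ, 1 ≤ i → ∀ h : 2*i < 2*k+1,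
    S ⟨2*i, h⟩ = (S ⟨2*i-1, by omega⟩).image (fun x => -x))

/-- m_j = min |S_j| (0 if the block is empty). -/
def mB {m : ℕ} (S : Fin m → Finset ℤ) (j : Fin m) : ℤ :=
  (((S j).image (fun x => |x|)).min).untopD 0

/-- M_j = max |S_j| (0 if the block is empty). -/
def MB {m : ℕ} (S : Fin m → Finset ℤ) (j : Fin m) : ℤ :=
  (((S j).image (fun x => |x|)).max).unbotD 0

/-- A standard type B partition: ordered, with m_{2i} ∈ S_{2i} for i ≥ 1 and
0 = m₀ < m₂ < m₄ < ... < m_{2k}. -/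
def IsStandardB (n k : ℕ) (S : Fin (2*k+1) → Finset ℤ) : Prop :=
  IsOrderedB n k S ∧
  (∀ i : ℕ, 1 ≤ i → ∀ h : 2*i < 2*k+1, mB S ⟨2*i, h⟩ ∈ S ⟨2*i, h⟩) ∧
  (∀ i : ℕ, ∀ h : 2*(i+1) < 2*k+1, mB S ⟨2*i, by omega⟩ < mB S ⟨2*(i+1), h⟩)

/-- inv ρ: number of pairs (s, S_j) with s ∈ S_i for some i < j and s ≥ m_j. -/
noncomputable def invB {m : ℕ} (S : Fin m → Finset ℤ) : ℕ :=
  {p : ℤ × Fin m | (∃ i < p.2, p.1 ∈ S i) ∧ mB S p.2 ≤ p.1}.ncard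

/-- ros_B = inv. -/
noncomputable def rosB {m : ℕ} (S : Fin m → Finset ℤ) : ℕ := invB S

/-- los_{B'}: pairs (s, S_j) with s ∈ S_i for some i > j and s ≥ m_j. -/
noncomputable def losB' {m : ℕ} (S : Fin m → Finset ℤ) : ℕ :=
  {p : ℤ × Fin m | (∃ i, p.2 < i ∧ p.1 ∈ S i) ∧ mB S p.2 ≤ p.1}.ncard

/-- lob_{B'}: pairs (s, S_j) with s ∈ S_i for some i > j and 0 < s ≤ m_j. -/
noncomputable def lobB' {m : ℕ} (S : Fin m → Finset ℤ) : ℕ :=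
  {p : ℤ × Fin m | (∃ i, p.2 < i ∧ p.1 ∈ S i) ∧ 0 < p.1 ∧ p.1 ≤ mB S p.2}.ncard

/-- rcb_B: pairs (s, S_j) with s ∈ S_i for some i < j and 0 < s ≤ M_j. -/
noncomputable def rcbB {m : ℕ} (S : Fin m → Finset ℤ) : ℕ :=
  {p : ℤ × Fin m | (∃ i < p.2, p.1 ∈ S i) ∧ 0 < p.1 ∧ p.1 ≤ MB S p.2}.ncard

/-- rob_B: pairs (s, S_j) with s ∈ S_i for some i < j and 0 < s ≤ m_j. -/
noncomputable def robB {m : ℕ} (S : Fin m → Finset ℤ) : ℕ :=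
  {p : ℤ × Fin m | (∃ i < p.2, p.1 ∈ S i) ∧ 0 < p.1 ∧ p.1 ≤ mB S p.2}.ncard

/-- rcs_B: pairs (s, S_j) with s ∈ S_i for some i < j and s ≥ M_j. -/
noncomputable def rcsB {m : ℕ} (S : Fin m → Finset ℤ) : ℕ :=
  {p : ℤ × Fin m | (∃ i < p.2, p.1 ∈ S i) ∧ MB S p.2 ≤ p.1}.ncard

/-- Type B Stirling numbers of the second kind. -/
def StirB : ℕ → ℕ → ℕ
  | 0, 0 => 1
  | 0, _+1 => 0
  | n+1, 0 => StirB n 0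
  | n+1, k+1 => StirB n k + (2*(k+1)+1) * StirB n (k+1)

/-- [m] = 1 + q + ... + q^{m-1}. -/
noncomputable def qb (m : ℕ) : Polynomial ℤ := ∑ i ∈ Finset.range m, (Polynomial.X : Polynomial ℤ) ^ i

/-- Type B q-Stirling numbers of the second kind. -/
noncomputable def qStirB : ℕ → ℕ → Polynomial ℤ
  | 0, 0 => 1
  | 0, _+1 => 0
  | n+1, 0 => qStirB n 0
  | n+1, k+1 => qStirB n k + qb (2*(k+1)+1) * qStirB n (k+1)

/-- [2k]!! = [2k][2k-2]⋯[2]. -/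
noncomputable def qdf : ℕ → Polynomial ℤ
  | 0 => 1
  | k+1 => qb (2*(k+1)) * qdf k

/-- The complement map on ⟨n⟩: i ↦ n+1-i for i > 0, -i ↦ -(n+1-i), 0 ↦ 0. -/
def complB (n : ℕ) (x : ℤ) : ℤ :=
  if 0 < x then (n : ℤ) + 1 - x else if x < 0 then -((n : ℤ) + 1) - x else 0

/-- Complement of a partition, blockwise. -/
def complP (n : ℕ) {m : ℕ} (S : Fin m → Finset ℤ) : Fin m → Finset ℤ :=
  fun j => (S j).image (complB n)

/-- The index of the block paired with block i: 0 ↦ 0, 2ℓ-1 ↦ 2ℓ, 2ℓ ↦ 2ℓ-1. -/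
def pairIdx (k : ℕ) (i : Fin (2*k+1)) : Fin (2*k+1) :=
  if i.val = 0 then i
  else if h2 : i.val % 2 = 1 then ⟨i.val + 1, by omega⟩ else ⟨i.val - 1, by omega⟩

/-- A signed restricted growth function, recorded by its entries a_0, a_1, ..., a_n
(the starred entries are determined: a_i^* = -a_i). -/
def IsSRGF (n : ℕ) (a : Fin (n+1) → ℤ) : Prop :=
  a 0 = 0 ∧
  (∀ i : Fin (n+1), 1 ≤ i.val →
    |a i| ≤ 1 + (((Finset.Iio i).image (fun j => |a j|)).max).unbotD 0) ∧
  (∀ i : Fin (n+1), 0 < a i → ∃ j < i, a j = -(a i))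

/-- The word of a type B partition: a_i = 0 if i ∈ S₀, a_i = -j if i ∈ S_{2j},
a_i = j if i ∈ S_{2j-1}. -/
noncomputable def wordOf (n k : ℕ) (S : Fin (2*k+1) → Finset ℤ) : Fin (n+1) → ℤ :=
  fun i =>
    if h : ∃ j : Fin (2*k+1), (i.val : ℤ) ∈ S j then
      (if (Classical.choose h).val % 2 = 1 then
        ((((Classical.choose h).val + 1) / 2 : ℕ) : ℤ)
      else -((((Classical.choose h).val) / 2 : ℕ) : ℤ))
    else 0

lemma mB_le {m : ℕ} (S : Fin m → Finset ℤ) (j : Fin m) {x : ℤ} (hx : x ∈ S j) :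
    mB S j ≤ |x| := by
  unfold mB
  have h1 : ((S j).image (fun x => |x|)).min ≤ ((|x| : ℤ) : WithTop ℤ) :=
    Finset.min_le (Finset.mem_image_of_mem _ hx)
  rcases Finset.min_of_mem (Finset.mem_image_of_mem (fun x => |x|) hx) with ⟨v, hv⟩
  rw [hv] at h1 ⊢
  exact_mod_cast h1

lemma mB_exists {m : ℕ} (S : Fin m → Finset ℤ) (j : Fin m) (h : (S j).Nonempty) :
    ∃ x ∈ S j, mB S j = |x| := by
  obtain ⟨x0, hx0⟩ := h
  rcases Finset.min_of_mem (Finset.mem_image_of_mem (fun x => |x|) hx0) with ⟨v, hv⟩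
  have := Finset.mem_of_min hv
  rcases Finset.mem_image.1 this with ⟨x, hx, hxv⟩
  exact ⟨x, hx, by unfold mB; rw [hv, ← hxv]; rfl⟩

lemma mB_nonneg {m : ℕ} (S : Fin m → Finset ℤ) (j : Fin m) : 0 ≤ mB S j := by
  by_cases h : (S j).Nonempty
  · obtain ⟨x, _, hx⟩ := mB_exists S j h
    rw [hx]; exact abs_nonneg x
  · unfold mB
    rw [Finset.not_nonempty_iff_eq_empty.1 h]
    simp

lemma mB_congr_abs {m : ℕ} (S : Fin m → Finset ℤ) (i j : Fin m)
    (h : (S i).image (fun x => |x|) = (S j).image (fun x => |x|)) : mB S i = mB S j := by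
  unfold mB; rw [h]

section Std
variable {n k : ℕ} {S : Fin (2*k+1) → Finset ℤ} (hS : IsStandardB n k S)
include hS

lemma uniqB {x : ℤ} {i j : Fin (2*k+1)} (hi : x ∈ S i) (hj : x ∈ S j) : i = j := by
  by_contra hne
  have := (hS.1.2.1 i j hne).le_bot (Finset.mem_inter.2 ⟨hi, hj⟩)
  simp at this

lemma subB (j : Fin (2*k+1)) : S j ⊆ angleB n := by
  intro x hx
  rw [← hS.1.2.2.1]
  exact Finset.mem_biUnion.2 ⟨j, Finset.mem_univ j, hx⟩

lemma coverB {x : ℤ} (hx : x ∈ angleB n) : ∃ j, x ∈ S j := by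
  rw [← hS.1.2.2.1] at hx
  rcases Finset.mem_biUnion.1 hx with ⟨j, _, hj⟩
  exact ⟨j, hj⟩

lemma negOdd {ℓ : ℕ} (hl : 1 ≤ ℓ) (h : 2*ℓ < 2*k+1) {x : ℤ}
    (hx : x ∈ S ⟨2*ℓ-1, by omega⟩) : -x ∈ S ⟨2*ℓ, h⟩ := by
  rw [hS.1.2.2.2.2.2 ℓ hl h]
  exact Finset.mem_image_of_mem _ hx

lemma negEven {ℓ : ℕ} (hl : 1 ≤ ℓ) (h : 2*ℓ < 2*k+1) {x : ℤ}
    (hx : x ∈ S ⟨2*ℓ, h⟩) : -x ∈ S ⟨2*ℓ-1, by omega⟩ := by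
  rw [hS.1.2.2.2.2.2 ℓ hl h] at hx
  rcases Finset.mem_image.1 hx with ⟨y, hy, hyx⟩
  rwa [← hyx, neg_neg]

lemma absImgEq {ℓ : ℕ} (hl : 1 ≤ ℓ) (h : 2*ℓ < 2*k+1) :
    (S ⟨2*ℓ, h⟩).image (fun x => |x|) = (S ⟨2*ℓ-1, by omega⟩).image (fun x => |x|) := by
  rw [hS.1.2.2.2.2.2 ℓ hl h, Finset.image_image]
  congr 1
  ext x
  simp [abs_neg]

lemma mB_pairEq {ℓ : ℕ} (hl : 1 ≤ ℓ) (h : 2*ℓ < 2*k+1) :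
    mB S ⟨2*ℓ, h⟩ = mB S ⟨2*ℓ-1, by omega⟩ :=
  mB_congr_abs S _ _ (absImgEq hS hl h)

lemma mB_zeroB : mB S 0 = 0 := by
  have h0 : mB S 0 ≤ |(0:ℤ)| := mB_le S 0 hS.1.2.2.2.1
  have := mB_nonneg S 0
  simp at h0; omega

lemma mB_posB {ℓ : ℕ} (hl : 1 ≤ ℓ) (h : 2*ℓ < 2*k+1) : 0 < mB S ⟨2*ℓ, h⟩ := by
  rcases lt_or_eq_of_le (mB_nonneg S ⟨2*ℓ, h⟩) with h' | h'
  · exact h'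
  · exfalso
    have hmem := hS.2.1 ℓ hl h
    rw [← h'] at hmem
    have : (⟨2*ℓ, h⟩ : Fin (2*k+1)) = 0 := uniqB hS hmem hS.1.2.2.2.1
    have h2 : (2*ℓ : ℕ) = 0 := by simpa using congrArg Fin.val this
    omega

lemma wordOf_spec {i : Fin (n+1)} {j : Fin (2*k+1)} (hx : ((i:ℕ):ℤ) ∈ S j) :
    wordOf n k S i = if j.val % 2 = 1 then (((j.val + 1) / 2 : ℕ) : ℤ)
      else -(((j.val / 2 : ℕ)) : ℤ) := by
  unfold wordOf
  have h : ∃ j : Fin (2*k+1), (i.val : ℤ) ∈ S j := ⟨j, hx⟩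
  rw [dif_pos h]
  have : Classical.choose h = j := uniqB hS (Classical.choose_spec h) hx
  rw [this]

end Std

lemma le_runMax {n : ℕ} (a : Fin (n+1) → ℤ) {j i : Fin (n+1)} (hj : j < i) :
    |a j| ≤ (((Finset.Iio i).image (fun j => |a j|)).max).unbotD 0 := by
  have hmem : |a j| ∈ (Finset.Iio i).image (fun j => |a j|) :=
    Finset.mem_image_of_mem _ (Finset.mem_Iio.2 hj)
  rcases Finset.max_of_mem hmem with ⟨v, hv⟩
  have := Finset.le_max hmem
  rw [hv] at this ⊢
  exact_mod_cast this

lemma mem_angle {n : ℕ} (i : Fin (n+1)) : ((i:ℕ):ℤ) ∈ angleB n := by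
  simp only [angleB, Finset.mem_Icc]
  constructor
  · have : (0:ℤ) ≤ ((i:ℕ):ℤ) := Int.natCast_nonneg _
    have : (0:ℤ) ≤ (n:ℤ) := Int.natCast_nonneg _
    omega
  · exact_mod_cast Nat.lt_succ_iff.1 i.isLt

section Std2
variable {n k : ℕ} {S : Fin (2*k+1) → Finset ℤ} (hS : IsStandardB n k S)
include hS

lemma word_zero : wordOf n k S 0 = 0 := by
  have h0 : (((0 : Fin (n+1)):ℕ):ℤ) ∈ S 0 := by
    simpa using hS.1.2.2.2.1
  rw [wordOf_spec hS h0]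
  norm_num

lemma word_cases (i : Fin (n+1)) :
    (wordOf n k S i = 0 ∧ ((i:ℕ):ℤ) ∈ S 0) ∨ ∃ ℓ : ℕ, 1 ≤ ℓ ∧ ∃ h : 2*ℓ < 2*k+1,
      ((wordOf n k S i = (ℓ:ℤ) ∧ ((i:ℕ):ℤ) ∈ S ⟨2*ℓ-1, by omega⟩)
      ∨ (wordOf n k S i = -(ℓ:ℤ) ∧ ((i:ℕ):ℤ) ∈ S ⟨2*ℓ, h⟩)) := by
  obtain ⟨j, hj⟩ := coverB hS (mem_angle i)
  rw [wordOf_spec hS hj]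
  rcases Nat.eq_zero_or_pos j.val with h0 | hpos
  · left
    have : j = 0 := Fin.ext (by simpa using h0)
    rw [this] at hj
    refine ⟨?_, hj⟩
    rw [if_neg (by omega)]
    simp [h0]
  · right
    by_cases hodd : j.val % 2 = 1
    · refine ⟨(j.val+1)/2, by omega, by have := j.isLt; omega, Or.inl ⟨?_, ?_⟩⟩
      · rw [if_pos hodd]
      · have : (⟨2*((j.val+1)/2)-1, by have := j.isLt; omega⟩ : Fin (2*k+1)) = j :=
          Fin.ext (by simp; omega)
        rwa [this]
    · refine ⟨j.val/2, by omega, by have := j.isLt; omega, Or.inr ⟨?_, ?_⟩⟩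
      · rw [if_neg hodd]
      · have : (⟨2*(j.val/2), by have := j.isLt; omega⟩ : Fin (2*k+1)) = j :=
          Fin.ext (by simp; omega)
        rwa [this]

lemma prev_elem {ℓ : ℕ} (hl : 1 ≤ ℓ) (h : 2*ℓ < 2*k+1) :
    ∃ q : Fin (n+1), ((q:ℕ):ℤ) = mB S ⟨2*ℓ, h⟩ ∧ wordOf n k S q = -(ℓ:ℤ) ∧
      ((q:ℕ):ℤ) ∈ S ⟨2*ℓ, h⟩ := by
  have hmem := hS.2.1 ℓ hl h
  have hnn : 0 ≤ mB S ⟨2*ℓ, h⟩ := mB_nonneg S _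
  have hle : mB S ⟨2*ℓ, h⟩ ≤ (n:ℤ) := by
    have := subB hS ⟨2*ℓ, h⟩ hmem
    simp only [angleB, Finset.mem_Icc] at this
    exact this.2
  refine ⟨⟨(mB S ⟨2*ℓ, h⟩).toNat, by omega⟩, ?_, ?_, ?_⟩
  · simp [Int.toNat_of_nonneg hnn]
  · have hmem' : ((((⟨(mB S ⟨2*ℓ, h⟩).toNat, by omega⟩ : Fin (n+1)):ℕ)):ℤ) ∈ S ⟨2*ℓ, h⟩ := by
      simpa [Int.toNat_of_nonneg hnn] using hmem
    rw [wordOf_spec hS hmem']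
    simp only [Fin.val_mk]
    rw [if_neg (by omega)]
    congr 1
    omega
  · simpa [Int.toNat_of_nonneg hnn] using hmem

lemma mB_le_of_word {i : Fin (n+1)} {ℓ : ℕ} (hl : 1 ≤ ℓ) (h : 2*ℓ < 2*k+1)
    (hi : ((i:ℕ):ℤ) ∈ S ⟨2*ℓ-1, by omega⟩ ∨ ((i:ℕ):ℤ) ∈ S ⟨2*ℓ, h⟩) :
    mB S ⟨2*ℓ, h⟩ ≤ ((i:ℕ):ℤ) := by
  rcases hi with hi | hi
  · rw [mB_pairEq hS hl h]
    have := mB_le S _ hi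
    have : |((i:ℕ):ℤ)| = ((i:ℕ):ℤ) := abs_of_nonneg (Int.natCast_nonneg _)
    calc mB S ⟨2*ℓ-1, by omega⟩ ≤ |((i:ℕ):ℤ)| := mB_le S _ hi
    _ = ((i:ℕ):ℤ) := this
  · calc mB S ⟨2*ℓ, h⟩ ≤ |((i:ℕ):ℤ)| := mB_le S _ hi
    _ = ((i:ℕ):ℤ) := abs_of_nonneg (Int.natCast_nonneg _)

end Std2

section Fwd
variable {n k : ℕ} {S : Fin (2*k+1) → Finset ℤ} (hS : IsStandardB n k S)
include hS

lemma word_abs_le (i : Fin (n+1)) : |wordOf n k S i| ≤ (k:ℤ) := by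
  rcases word_cases hS i with ⟨hw, _⟩ | ⟨ℓ, hl, h, ⟨hw, _⟩ | ⟨hw, _⟩⟩ <;> rw [hw]
  · simp
  · rw [abs_of_nonneg (Int.natCast_nonneg _)]
    exact_mod_cast (by omega : ℓ ≤ k)
  · rw [abs_neg, abs_of_nonneg (Int.natCast_nonneg _)]
    exact_mod_cast (by omega : ℓ ≤ k)

lemma word_abs_exists : ∃ i, |wordOf n k S i| = (k:ℤ) := by
  rcases Nat.eq_zero_or_pos k with hk | hk
  · refine ⟨0, ?_⟩
    rw [word_zero hS, hk]
    simp
  · obtain ⟨q, _, hq2, _⟩ := prev_elem hS hk (by omega)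
    refine ⟨q, ?_⟩
    rw [hq2, abs_neg, abs_of_nonneg (Int.natCast_nonneg _)]

lemma word_lt_of_mem {i q : Fin (n+1)} {ℓ : ℕ} (hl : 1 ≤ ℓ) (h : 2*ℓ < 2*k+1)
    (hq1 : ((q:ℕ):ℤ) = mB S ⟨2*ℓ, h⟩) (hqm : ((q:ℕ):ℤ) ∈ S ⟨2*ℓ, h⟩)
    (hi : ((i:ℕ):ℤ) ∈ S ⟨2*ℓ-1, by omega⟩) : q < i := by
  have hle : mB S ⟨2*ℓ, h⟩ ≤ ((i:ℕ):ℤ) := mB_le_of_word hS hl h (Or.inl hi)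
  rw [← hq1] at hle
  rcases lt_or_eq_of_le hle with hlt | heq
  · have : (q:ℕ) < (i:ℕ) := by exact_mod_cast hlt
    exact this
  · exfalso
    rw [heq] at hqm
    have := uniqB hS hqm hi
    have := congrArg Fin.val this
    simp at this
    omega

lemma word_srgf : IsSRGF n (wordOf n k S) := by
  refine ⟨word_zero hS, ?_, ?_⟩
  · intro i hi
    have hi0 : (0 : Fin (n+1)) < i := by
      simp only [Fin.lt_def]
      exact lt_of_lt_of_le (by simp) hi
    have hrm0 : (0:ℤ) ≤ (((Finset.Iio i).image (fun j => |wordOf n k S j|)).max).unbotD 0 :=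
      le_trans (abs_nonneg _) (le_runMax _ hi0)
    rcases word_cases hS i with ⟨hw, _⟩ | ⟨ℓ, hl, h, hcase⟩
    · rw [hw]; simpa using by linarith
    · have hwabs : |wordOf n k S i| = (ℓ:ℤ) := by
        rcases hcase with ⟨hw, _⟩ | ⟨hw, _⟩ <;> rw [hw]
        · exact abs_of_nonneg (Int.natCast_nonneg _)
        · rw [abs_neg]; exact abs_of_nonneg (Int.natCast_nonneg _)
      rw [hwabs]
      rcases Nat.lt_or_ge ℓ 2 with hl2 | hl2
      · have : (ℓ:ℤ) ≤ 1 := by exact_mod_cast (by omega : ℓ ≤ 1)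
        linarith
      · obtain ⟨q, hq1, hq2, hqm⟩ := prev_elem hS (by omega : 1 ≤ ℓ - 1)
          (by omega : 2*(ℓ-1) < 2*k+1)
        -- chain : mB at 2(ℓ-1) < mB at 2ℓ
        have hchain := hS.2.2 (ℓ-1) (by omega : 2*((ℓ-1)+1) < 2*k+1)
        have he1 : (⟨2*(ℓ-1), by omega⟩ : Fin (2*k+1)) = ⟨2*(ℓ-1), by omega⟩ := rfl
        have he2 : (⟨2*((ℓ-1)+1), by omega⟩ : Fin (2*k+1)) = ⟨2*ℓ, h⟩ :=
          Fin.ext (by simp; omega)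
        rw [he2] at hchain
        have hile : mB S ⟨2*ℓ, h⟩ ≤ ((i:ℕ):ℤ) := by
          apply mB_le_of_word hS hl h
          rcases hcase with ⟨_, hm⟩ | ⟨_, hm⟩
          · exact Or.inl hm
          · exact Or.inr hm
        have hqi : q < i := by
          have : ((q:ℕ):ℤ) < ((i:ℕ):ℤ) := by rw [hq1]; linarith
          have : (q:ℕ) < (i:ℕ) := by exact_mod_cast this
          exact this
        have hrm : |wordOf n k S q| ≤ (((Finset.Iio i).image (fun j => |wordOf n k S j|)).max).unbotD 0 :=
          le_runMax _ hqi
        rw [hq2, abs_neg, abs_of_nonneg (Int.natCast_nonneg _)] at hrm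
        have : ((ℓ - 1 : ℕ):ℤ) = (ℓ:ℤ) - 1 := by push_cast [hl]; ring
        rw [this] at hrm
        linarith
  · intro i hpos
    rcases word_cases hS i with ⟨hw, _⟩ | ⟨ℓ, hl, h, hcase⟩
    · rw [hw] at hpos; omega
    · rcases hcase with ⟨hw, hm⟩ | ⟨hw, _⟩
      · obtain ⟨q, hq1, hq2, hqm⟩ := prev_elem hS hl h
        refine ⟨q, word_lt_of_mem hS hl h hq1 hqm hm, ?_⟩
        rw [hq2, hw]
      · rw [hw] at hpos
        have : (0:ℤ) ≤ (ℓ:ℤ) := Int.natCast_nonneg _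
        omega

end Fwd

def aval (n : ℕ) (a : Fin (n+1) → ℤ) (x : ℤ) : ℤ :=
  if h : x.natAbs ≤ n then a ⟨x.natAbs, Nat.lt_succ_of_le h⟩ else 0

def idxOf (n : ℕ) (a : Fin (n+1) → ℤ) (x : ℤ) : ℕ :=
  if (aval n a x) = 0 then 0
  else if (0 < x ∧ 0 < aval n a x) ∨ (x < 0 ∧ aval n a x < 0) then 2 * (aval n a x).natAbs - 1
  else 2 * (aval n a x).natAbs

noncomputable def partOf (n k : ℕ) (a : Fin (n+1) → ℤ) : Fin (2*k+1) → Finset ℤ :=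
  fun j => (angleB n).filter (fun x => idxOf n a x = j.val)

lemma aval_natCast {n : ℕ} (a : Fin (n+1) → ℤ) (i : Fin (n+1)) :
    aval n a ((i:ℕ):ℤ) = a i := by
  unfold aval
  have h : (((i:ℕ):ℤ)).natAbs = (i:ℕ) := Int.natAbs_natCast _
  rw [dif_pos (by rw [h]; exact Nat.lt_succ_iff.1 i.isLt)]
  congr 1

lemma aval_neg {n : ℕ} (a : Fin (n+1) → ℤ) (x : ℤ) : aval n a (-x) = aval n a x := by
  unfold aval
  simp [Int.natAbs_neg]

lemma mem_partOf {n k : ℕ} (a : Fin (n+1) → ℤ) (j : Fin (2*k+1)) (x : ℤ) :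
    x ∈ partOf n k a j ↔ x ∈ angleB n ∧ idxOf n a x = j.val := by
  simp [partOf]

-- positive position with given letter
lemma idx_pos_of_val {n : ℕ} {a : Fin (n+1) → ℤ} {i : Fin (n+1)} :
    (a i = 0 → idxOf n a ((i:ℕ):ℤ) = 0) ∧
    (0 < (i:ℕ) → 0 < a i → idxOf n a ((i:ℕ):ℤ) = 2 * (a i).natAbs - 1) ∧
    (0 < (i:ℕ) → a i < 0 → idxOf n a ((i:ℕ):ℤ) = 2 * (a i).natAbs) := by
  refine ⟨?_, ?_, ?_⟩ <;> unfold idxOf <;> rw [aval_natCast]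
  · intro h; rw [if_pos h]
  · intro hi h
    rw [if_neg (by omega), if_pos (Or.inl ⟨by exact_mod_cast hi, h⟩)]
  · intro hi h
    rw [if_neg (by omega), if_neg ?_]
    rintro (⟨_, h2⟩ | ⟨h1, _⟩)
    · omega
    · have : (0:ℤ) ≤ ((i:ℕ):ℤ) := Int.natCast_nonneg _
      omega

lemma idx_neg_of_val {n : ℕ} {a : Fin (n+1) → ℤ} {i : Fin (n+1)} :
    (a i = 0 → idxOf n a (-((i:ℕ):ℤ)) = 0) ∧
    (0 < (i:ℕ) → 0 < a i → idxOf n a (-((i:ℕ):ℤ)) = 2 * (a i).natAbs) ∧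
    (0 < (i:ℕ) → a i < 0 → idxOf n a (-((i:ℕ):ℤ)) = 2 * (a i).natAbs - 1) := by
  refine ⟨?_, ?_, ?_⟩ <;> unfold idxOf <;> rw [aval_neg, aval_natCast]
  · intro h; rw [if_pos h]
  · intro hi h
    rw [if_neg (by omega), if_neg ?_]
    rintro (⟨h1, _⟩ | ⟨_, h2⟩)
    · have : (0:ℤ) < ((i:ℕ):ℤ) := by exact_mod_cast hi
      omega
    · omega
  · intro hi h
    have : (0:ℤ) < ((i:ℕ):ℤ) := by exact_mod_cast hi
    rw [if_neg (by omega), if_pos (Or.inr ⟨by omega, h⟩)]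

-- the letter of any position, from its index
lemma natAbs_of_idx {n : ℕ} {a : Fin (n+1) → ℤ} {x : ℤ} {j : ℕ} (hj : 1 ≤ j)
    (h : idxOf n a x = 2*j ∨ idxOf n a x = 2*j - 1) : (aval n a x).natAbs = j := by
  unfold idxOf at h
  split_ifs at h with h1 h2
  · omega
  · have : (aval n a x).natAbs ≠ 0 := fun hc => h1 (Int.natAbs_eq_zero.1 hc)
    omega
  · have : (aval n a x).natAbs ≠ 0 := fun hc => h1 (Int.natAbs_eq_zero.1 hc)
    omega

lemma runMax_le {n : ℕ} (a : Fin (n+1) → ℤ) (i : Fin (n+1)) {c : ℤ} (hc : 0 ≤ c)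
    (h : ∀ j < i, |a j| ≤ c) :
    (((Finset.Iio i).image (fun j => |a j|)).max).unbotD 0 ≤ c := by
  rcases hmax : ((Finset.Iio i).image (fun j => |a j|)).max with _ | m
  · exact hc
  · have := Finset.mem_of_max hmax
    rcases Finset.mem_image.1 this with ⟨r, hr, hrm⟩
    have : m ≤ c := hrm ▸ h r (Finset.mem_Iio.1 hr)
    exact this

lemma exists_of_runMax {n : ℕ} (a : Fin (n+1) → ℤ) (i : Fin (n+1)) {c : ℤ} (hc : 0 < c)
    (h : c ≤ (((Finset.Iio i).image (fun j => |a j|)).max).unbotD 0) :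
    ∃ r < i, c ≤ |a r| := by
  have hne : (((Finset.Iio i).image (fun j => |a j|))).Nonempty := by
    by_contra hcon
    rw [Finset.not_nonempty_iff_eq_empty] at hcon
    rw [hcon] at h
    simp at h
    omega
  obtain ⟨m, hmax⟩ := Finset.max_of_nonempty hne
  rw [hmax] at h
  rw [WithBot.unbotD_coe] at h
  have := Finset.mem_of_max hmax
  rcases Finset.mem_image.1 this with ⟨r, hr, hrm⟩
  exact ⟨r, Finset.mem_Iio.1 hr, hrm ▸ h⟩

section Bwd
variable {n k : ℕ} {a : Fin (n+1) → ℤ} (ha : IsSRGF n a)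
  (hb : ∀ i, |a i| ≤ (k:ℤ)) (hex : ∃ i, |a i| = (k:ℤ))

-- the minimal position whose letter is ≥ j carries exactly letter j, negatively
include ha hex in
lemma firstOcc_spec {j : ℕ} (hj1 : 1 ≤ j) (hjk : j ≤ k) :
    ∃ p : Fin (n+1), a p = -(j:ℤ) ∧ (∀ r : Fin (n+1), (j:ℤ) ≤ |a r| → p ≤ r) := by
  obtain ⟨w, hw⟩ := hex
  have hne : (Finset.univ.filter (fun i : Fin (n+1) => (j:ℤ) ≤ |a i|)).Nonempty :=
    ⟨w, Finset.mem_filter.2 ⟨Finset.mem_univ _, by rw [hw]; exact_mod_cast hjk⟩⟩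
  set T := Finset.univ.filter (fun i : Fin (n+1) => (j:ℤ) ≤ |a i|) with hT
  refine ⟨T.min' hne, ?_, fun r hr => T.min'_le r (Finset.mem_filter.2 ⟨Finset.mem_univ _, hr⟩)⟩
  set p := T.min' hne with hp
  have hpmem : (j:ℤ) ≤ |a p| := (Finset.mem_filter.1 (T.min'_mem hne)).2
  have hlt : ∀ r : Fin (n+1), r < p → |a r| < (j:ℤ) := by
    intro r hr
    by_contra hcon
    exact absurd (T.min'_le r (Finset.mem_filter.2 ⟨Finset.mem_univ _, by omega⟩))
      (by omega)
  have hp1 : 1 ≤ (p:ℕ) := by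
    by_contra hcon
    have : p = 0 := Fin.ext (by simp only [Fin.val_zero]; omega)
    rw [this, ha.1] at hpmem
    simp at hpmem
    omega
  have hgrow := ha.2.1 p hp1
  have hrm : (((Finset.Iio p).image (fun j => |a j|)).max).unbotD 0 ≤ (j:ℤ) - 1 := by
    apply runMax_le a p (by omega)
    intro r hr
    have := hlt r hr
    omega
  have habs : |a p| = (j:ℤ) := by omega
  have : a p = (j:ℤ) ∨ a p = -(j:ℤ) := abs_eq (by positivity) |>.1 habs
  rcases this with hcase | hcase
  · exfalso
    obtain ⟨r, hrp, hra⟩ := ha.2.2 p (by rw [hcase]; exact_mod_cast hj1)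
    rw [hcase] at hra
    have : (j:ℤ) ≤ |a r| := by rw [hra]; simp
    have hle := T.min'_le r (Finset.mem_filter.2 ⟨Finset.mem_univ _, this⟩)
    exact absurd hle (not_le.2 hrp)
  · exact hcase

end Bwd

lemma natAbs_le_of_angle {n : ℕ} {x : ℤ} (h : x ∈ angleB n) : x.natAbs ≤ n := by
  simp only [angleB, Finset.mem_Icc] at h
  omega

lemma neg_mem_angle {n : ℕ} {x : ℤ} (h : x ∈ angleB n) : -x ∈ angleB n := by
  simp only [angleB, Finset.mem_Icc] at h ⊢
  omega

lemma aval_zero {n : ℕ} (a : Fin (n+1) → ℤ) : aval n a 0 = a 0 := by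
  unfold aval
  rw [dif_pos (by simp)]
  congr 1

lemma idx_zero {n : ℕ} {a : Fin (n+1) → ℤ} {x : ℤ} (h : idxOf n a x = 0) :
    aval n a x = 0 := by
  unfold idxOf at h
  split_ifs at h with h1 h2
  · exact h1
  all_goals
  · exfalso
    have : (aval n a x).natAbs ≠ 0 := fun hc => h1 (Int.natAbs_eq_zero.1 hc)
    omega

lemma idx_neg_pair {n : ℕ} {a : Fin (n+1) → ℤ} (h00 : aval n a 0 = 0) {x : ℤ} {i : ℕ}
    (hi : 1 ≤ i) : idxOf n a x = 2*i ↔ idxOf n a (-x) = 2*i - 1 := by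
  by_cases hv : aval n a x = 0
  · unfold idxOf
    rw [aval_neg, if_pos hv, if_pos hv]
    omega
  · have hx0 : x ≠ 0 := by rintro rfl; exact hv h00
    have hm : 1 ≤ (aval n a x).natAbs := by
      have : (aval n a x).natAbs ≠ 0 := fun hc => hv (Int.natAbs_eq_zero.1 hc)
      omega
    unfold idxOf
    rw [aval_neg, if_neg hv, if_neg hv]
    rcases lt_or_gt_of_ne hx0 with hx | hx <;> rcases lt_or_gt_of_ne hv with hv' | hv'
    · rw [if_pos (Or.inr ⟨hx, hv'⟩), if_neg (by rintro (⟨h1,h2⟩|⟨h1,h2⟩) <;> omega)]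
      omega
    · rw [if_neg (by rintro (⟨h1,h2⟩|⟨h1,h2⟩) <;> omega),
        if_pos (Or.inl ⟨by omega, hv'⟩)]
      omega
    · rw [if_neg (by rintro (⟨h1,h2⟩|⟨h1,h2⟩) <;> omega),
        if_pos (Or.inr ⟨by omega, hv'⟩)]
      omega
    · rw [if_pos (Or.inl ⟨hx, hv'⟩), if_neg (by rintro (⟨h1,h2⟩|⟨h1,h2⟩) <;> omega)]
      omega

section Bwd2
variable {n k : ℕ} {a : Fin (n+1) → ℤ} (ha : IsSRGF n a)
  (hb : ∀ i, |a i| ≤ (k:ℤ)) (hex : ∃ i, |a i| = (k:ℤ))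

include hb in
lemma aval_natAbs_le (x : ℤ) : (aval n a x).natAbs ≤ k := by
  unfold aval
  split_ifs with h
  · have := hb ⟨x.natAbs, Nat.lt_succ_of_le h⟩
    rw [Int.abs_eq_natAbs] at this
    exact_mod_cast this
  · simp

include hb in
lemma idx_lt (x : ℤ) : idxOf n a x < 2*k+1 := by
  have := aval_natAbs_le hb x
  unfold idxOf
  split_ifs <;> omega

include ha in
lemma zero_mem_part : (0:ℤ) ∈ partOf n k a 0 := by
  rw [mem_partOf]
  refine ⟨by simp [angleB], ?_⟩
  unfold idxOf
  rw [aval_zero, ha.1, if_pos rfl]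
  rfl

-- FO predicate facts
include ha in
lemma fo_val_pos {j : ℕ} {p : Fin (n+1)} (hj : 1 ≤ j) (hp : a p = -(j:ℤ)) : 1 ≤ (p:ℕ) := by
  by_contra hcon
  have : p = 0 := Fin.ext (by simp only [Fin.val_zero]; omega)
  rw [this, ha.1] at hp
  have : (0:ℤ) < (j:ℤ) := by exact_mod_cast hj
  omega

include ha in
lemma fo_mem {j : ℕ} {p : Fin (n+1)} (hj : 1 ≤ j) (h2 : 2*j < 2*k+1)
    (hp : a p = -(j:ℤ)) : ((p:ℕ):ℤ) ∈ partOf n k a ⟨2*j, h2⟩ := by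
  rw [mem_partOf]
  refine ⟨mem_angle p, ?_⟩
  have hneg : a p < 0 := by
    have : (0:ℤ) < (j:ℤ) := by exact_mod_cast hj
    omega
  have h3 := idx_pos_of_val (n := n) (a := a) (i := p) |>.2.2
    (fo_val_pos ha hj hp) hneg
  rw [h3, hp]
  simp [Int.natAbs_neg]

include ha in
lemma fo_negmem {j : ℕ} {p : Fin (n+1)} (hj : 1 ≤ j) (h2 : 2*j-1 < 2*k+1)
    (hp : a p = -(j:ℤ)) : -((p:ℕ):ℤ) ∈ partOf n k a ⟨2*j-1, h2⟩ := by
  rw [mem_partOf]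
  refine ⟨neg_mem_angle (mem_angle p), ?_⟩
  have hneg : a p < 0 := by
    have : (0:ℤ) < (j:ℤ) := by exact_mod_cast hj
    omega
  have h3 := idx_neg_of_val (n := n) (a := a) (i := p) |>.2.2
    (fo_val_pos ha hj hp) hneg
  rw [h3, hp]
  simp [Int.natAbs_neg]

include ha in
lemma fo_mB {j : ℕ} {p : Fin (n+1)} (hj : 1 ≤ j) (h2 : 2*j < 2*k+1)
    (hp : a p = -(j:ℤ)) (hmin : ∀ r : Fin (n+1), (j:ℤ) ≤ |a r| → p ≤ r) :
    mB (partOf n k a) ⟨2*j, h2⟩ = ((p:ℕ):ℤ) := by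
  have hmem := fo_mem ha hj h2 hp
  have hle : mB (partOf n k a) ⟨2*j, h2⟩ ≤ ((p:ℕ):ℤ) := by
    have := mB_le (partOf n k a) _ hmem
    rwa [abs_of_nonneg (Int.natCast_nonneg _)] at this
  have hge : ((p:ℕ):ℤ) ≤ mB (partOf n k a) ⟨2*j, h2⟩ := by
    obtain ⟨x0, hx0, hx0e⟩ := mB_exists (partOf n k a) ⟨2*j, h2⟩ ⟨_, hmem⟩
    rw [hx0e]
    rw [mem_partOf] at hx0
    have hxa : x0.natAbs ≤ n := natAbs_le_of_angle hx0.1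
    have hidx : idxOf n a x0 = 2*j := hx0.2
    have habs : (aval n a x0).natAbs = j := natAbs_of_idx hj (Or.inl hidx)
    set r : Fin (n+1) := ⟨x0.natAbs, Nat.lt_succ_of_le hxa⟩ with hr
    have har : aval n a x0 = a r := by
      unfold aval
      rw [dif_pos hxa]
    have : (j:ℤ) ≤ |a r| := by
      rw [Int.abs_eq_natAbs, ← har]
      exact_mod_cast habs.ge
    have hpr := hmin r this
    have : ((p:ℕ):ℤ) ≤ ((r:ℕ):ℤ) := by exact_mod_cast hpr
    calc ((p:ℕ):ℤ) ≤ ((r:ℕ):ℤ) := this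
    _ = |x0| := by rw [Int.abs_eq_natAbs]
  omega

end Bwd2

section Bwd3
variable {n k : ℕ} {a : Fin (n+1) → ℤ} (ha : IsSRGF n a)
  (hb : ∀ i, |a i| ≤ (k:ℤ)) (hex : ∃ i, |a i| = (k:ℤ))

include ha in
lemma fo_lt {j : ℕ} {p q : Fin (n+1)} (hj : 1 ≤ j) (hq : a q = -((j:ℤ)+1))
    (hpmin : ∀ r : Fin (n+1), (j:ℤ) ≤ |a r| → p ≤ r) : p < q := by
  have hq' : a q = -(((j+1:ℕ)):ℤ) := by rw [hq]; push_cast; ring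
  have hq1 : 1 ≤ (q:ℕ) := fo_val_pos ha (by omega) hq'
  have hgrow := ha.2.1 q hq1
  have habs : |a q| = (j:ℤ)+1 := by
    rw [hq, abs_neg, abs_of_nonneg (by positivity)]
  have hrm : (j:ℤ) ≤ (((Finset.Iio q).image (fun r => |a r|)).max).unbotD 0 := by omega
  obtain ⟨r, hrq, hr⟩ := exists_of_runMax a q (by exact_mod_cast hj) hrm
  exact lt_of_le_of_lt (hpmin r hr) hrq

include ha hb in
lemma mB_part_zero (h0 : 0 < 2*k+1) : mB (partOf n k a) ⟨0, h0⟩ = 0 := by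
  have hz : (0:ℤ) ∈ partOf n k a ⟨0, h0⟩ := by
    have := zero_mem_part (k := k) ha
    convert this using 2
    exact Fin.ext (by simp)
  have h1 := mB_le (partOf n k a) _ hz
  have h2 := mB_nonneg (partOf n k a) ⟨0, h0⟩
  rw [abs_zero] at h1
  omega

include ha hb hex in
lemma partOf_standard : IsStandardB n k (partOf n k a) := by
  have h00 : aval n (a := a) 0 = 0 := by rw [aval_zero]; exact ha.1
  have FO := fun (j : ℕ) (hj : 1 ≤ j) (hjk : j ≤ k) => firstOcc_spec ha hex hj hjk
  choose P hP1 hP2 using FO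
  refine ⟨⟨?_, ?_, ?_, zero_mem_part ha, ?_, ?_⟩, ?_, ?_⟩
  · -- nonempty
    intro i
    rcases Nat.eq_zero_or_pos i.val with h0 | hpos
    · have hi : i = 0 := Fin.ext (by simpa using h0)
      exact ⟨0, by rw [hi]; exact zero_mem_part ha⟩
    · by_cases hodd : i.val % 2 = 1
      · obtain ⟨j, hj1, hjv⟩ : ∃ j, 1 ≤ j ∧ i.val = 2*j-1 :=
          ⟨(i.val+1)/2, by omega, by omega⟩
        have hjk : j ≤ k := by have := i.isLt; omega
        have := fo_negmem ha (k := k) hj1 (by have := i.isLt; omega) (hP1 j hj1 hjk)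
        have hi : i = ⟨2*j-1, by have := i.isLt; omega⟩ := Fin.ext (by simpa using hjv)
        exact ⟨_, by rw [hi]; exact this⟩
      · obtain ⟨j, hj1, hjv⟩ : ∃ j, 1 ≤ j ∧ i.val = 2*j :=
          ⟨i.val/2, by omega, by omega⟩
        have hjk : j ≤ k := by have := i.isLt; omega
        have := fo_mem ha (k := k) hj1 (by have := i.isLt; omega) (hP1 j hj1 hjk)
        have hi : i = ⟨2*j, by have := i.isLt; omega⟩ := Fin.ext (by simpa using hjv)
        exact ⟨_, by rw [hi]; exact this⟩
  · -- disjoint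
    intro i j hij
    rw [Finset.disjoint_left]
    intro x hx hx'
    rw [mem_partOf] at hx hx'
    exact hij (Fin.ext (by omega))
  · -- cover
    ext x
    constructor
    · intro hx
      rcases Finset.mem_biUnion.1 hx with ⟨j, -, hj⟩
      exact ((mem_partOf a j x).1 hj).1
    · intro hx
      exact Finset.mem_biUnion.2 ⟨⟨idxOf n a x, idx_lt hb x⟩, Finset.mem_univ _,
        (mem_partOf _ _ _).2 ⟨hx, rfl⟩⟩
  · -- S0 neg closed
    intro x hx
    rw [mem_partOf] at hx ⊢
    refine ⟨neg_mem_angle hx.1, ?_⟩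
    have hv : aval n a x = 0 := idx_zero hx.2
    unfold idxOf
    rw [aval_neg, if_pos hv]
    simp
  · -- pairing
    intro i hi h
    ext y
    rw [Finset.mem_image]
    constructor
    · intro hy
      refine ⟨-y, ?_, neg_neg y⟩
      rw [mem_partOf] at hy ⊢
      refine ⟨neg_mem_angle hy.1, ?_⟩
      have h2 := hy.2
      simp only [Fin.val_mk] at h2 ⊢
      exact (idx_neg_pair h00 hi).1 h2
    · rintro ⟨x, hx, rfl⟩
      rw [mem_partOf] at hx ⊢
      refine ⟨neg_mem_angle hx.1, ?_⟩
      have h2 := hx.2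
      simp only [Fin.val_mk] at h2 ⊢
      have hpair := (idx_neg_pair h00 hi (x := -x)).2
      rw [neg_neg] at hpair
      exact hpair h2
  · -- mB mem
    intro i hi h
    have hjk : i ≤ k := by omega
    rw [fo_mB ha hi h (hP1 i hi hjk) (hP2 i hi hjk)]
    exact fo_mem ha hi h (hP1 i hi hjk)
  · -- chain
    intro i h
    have hik : i + 1 ≤ k := by omega
    have hR : mB (partOf n k a) ⟨2*(i+1), h⟩ = (((P (i+1) (by omega) hik :ℕ)):ℤ) :=
      fo_mB ha (by omega) h (hP1 (i+1) (by omega) hik) (hP2 (i+1) (by omega) hik)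
    rcases Nat.eq_zero_or_pos i with h0 | hpos
    · subst h0
      have e : (⟨2*0, by omega⟩ : Fin (2*k+1)) = ⟨0, by omega⟩ := Fin.ext (by simp)
      rw [e, mB_part_zero ha hb, hR]
      have := fo_val_pos ha (j := 1) le_rfl (by
        have := hP1 1 le_rfl hik
        simpa using this)
      exact_mod_cast this
    · have hik' : i ≤ k := by omega
      rw [hR, fo_mB ha hpos (by omega) (hP1 i hpos hik') (hP2 i hpos hik')]
      have : P i hpos hik' < P (i+1) (by omega) hik := by
        apply fo_lt ha (j := i) hpos
        · have := hP1 (i+1) (by omega) hik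
          rw [this]; push_cast; ring
        · exact hP2 i hpos hik'
      exact_mod_cast this

end Bwd3

section Inv
variable {n k : ℕ} {a : Fin (n+1) → ℤ} (ha : IsSRGF n a)
  (hb : ∀ i, |a i| ≤ (k:ℤ))

include ha hb in
lemma word_partOf : wordOf n k (partOf n k a) = a := by
  funext i
  have hmem : ((i:ℕ):ℤ) ∈ partOf n k a ⟨idxOf n a ((i:ℕ):ℤ), idx_lt hb _⟩ :=
    (mem_partOf _ _ _).2 ⟨mem_angle i, rfl⟩
  have h : ∃ j : Fin (2*k+1), ((i:ℕ):ℤ) ∈ partOf n k a j := ⟨_, hmem⟩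
  unfold wordOf
  rw [dif_pos h]
  have hc : Classical.choose h = ⟨idxOf n a ((i:ℕ):ℤ), idx_lt hb _⟩ := by
    have hcs := Classical.choose_spec h
    rw [mem_partOf] at hcs
    exact Fin.ext hcs.2.symm
  rw [hc]
  simp only [Fin.val_mk]
  rcases lt_trichotomy (a i) 0 with hai | hai | hai
  · have hi1 : 0 < (i:ℕ) := by
      by_contra hcon
      have : i = 0 := Fin.ext (by simp only [Fin.val_zero]; omega)
      rw [this, ha.1] at hai
      omega
    rw [idx_pos_of_val.2.2 hi1 hai]
    have hm : 1 ≤ (a i).natAbs := by omega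
    rw [if_neg (by omega)]
    have he : (2 * (a i).natAbs)/2 = (a i).natAbs := by omega
    rw [he]
    omega
  · rw [idx_pos_of_val.1 hai, if_neg (by omega)]
    simpa using hai.symm
  · have hi1 : 0 < (i:ℕ) := by
      by_contra hcon
      have : i = 0 := Fin.ext (by simp only [Fin.val_zero]; omega)
      rw [this, ha.1] at hai
      omega
    rw [idx_pos_of_val.2.1 hi1 hai]
    have hm : 1 ≤ (a i).natAbs := by omega
    rw [if_pos (by omega)]
    have he : (2 * (a i).natAbs - 1 + 1)/2 = (a i).natAbs := by omega
    rw [he]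
    omega

end Inv

section Inv2
variable {n k : ℕ} {S : Fin (2*k+1) → Finset ℤ} (hS : IsStandardB n k S)
include hS

lemma keyL {x : ℤ} {j : Fin (2*k+1)} (hx : x ∈ S j) :
    idxOf n (wordOf n k S) x = j.val := by
  have hxa : x ∈ angleB n := subB hS j hx
  rcases lt_trichotomy x 0 with hneg | rfl | hpos
  · -- x < 0 : let i be the position -x
    have hna : (-x).natAbs ≤ n := by rw [Int.natAbs_neg]; exact natAbs_le_of_angle hxa
    obtain ⟨i, hxi⟩ : ∃ i : Fin (n+1), ((i:ℕ):ℤ) = -x :=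
      ⟨⟨(-x).natAbs, Nat.lt_succ_of_le hna⟩, by simp only [Fin.val_mk]; omega⟩
    have hxe : x = -((i:ℕ):ℤ) := by omega
    have hipos : 0 < (i:ℕ) := by
      have : ((i:ℕ):ℤ) > 0 := by omega
      exact_mod_cast this
    rcases word_cases hS i with ⟨hw, hm⟩ | ⟨ℓ, hl, h, ⟨hw, hm⟩ | ⟨hw, hm⟩⟩
    · have hmx : x ∈ S 0 := by
        have := hS.1.2.2.2.2.1 _ hm
        rwa [← hxe] at this
      rw [uniqB hS hx hmx]
      rw [hxe, idx_neg_of_val.1 hw]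
      simp
    · have hmx : x ∈ S ⟨2*ℓ, h⟩ := by
        have := negOdd hS hl h hm
        rwa [← hxe] at this
      rw [uniqB hS hx hmx]
      rw [hxe, idx_neg_of_val.2.1 hipos (by rw [hw]; exact_mod_cast hl)]
      simp [hw]
    · have hmx : x ∈ S ⟨2*ℓ-1, by omega⟩ := by
        have := negEven hS hl h hm
        rwa [← hxe] at this
      rw [uniqB hS hx hmx]
      rw [hxe, idx_neg_of_val.2.2 hipos (by rw [hw]; simp; exact_mod_cast hl)]
      simp [hw]
  · -- x = 0
    rw [uniqB hS hx hS.1.2.2.2.1]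
    have h0 : aval n (wordOf n k S) 0 = 0 := by rw [aval_zero]; exact word_zero hS
    unfold idxOf
    rw [if_pos h0]
    simp
  · -- x > 0
    have hna : x.natAbs ≤ n := natAbs_le_of_angle hxa
    obtain ⟨i, hxi⟩ : ∃ i : Fin (n+1), ((i:ℕ):ℤ) = x :=
      ⟨⟨x.natAbs, Nat.lt_succ_of_le hna⟩, by simp only [Fin.val_mk]; omega⟩
    have hipos : 0 < (i:ℕ) := by
      have : ((i:ℕ):ℤ) > 0 := by omega
      exact_mod_cast this
    rcases word_cases hS i with ⟨hw, hm⟩ | ⟨ℓ, hl, h, ⟨hw, hm⟩ | ⟨hw, hm⟩⟩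
    · rw [hxi] at hm
      rw [uniqB hS hx hm, ← hxi, idx_pos_of_val.1 hw]
      simp
    · rw [hxi] at hm
      rw [uniqB hS hx hm, ← hxi,
        idx_pos_of_val.2.1 hipos (by rw [hw]; exact_mod_cast hl)]
      simp [hw]
    · rw [hxi] at hm
      rw [uniqB hS hx hm, ← hxi,
        idx_pos_of_val.2.2 hipos (by rw [hw]; simp; exact_mod_cast hl)]
      simp [hw]

lemma partOf_wordOf : partOf n k (wordOf n k S) = S := by
  funext j
  ext x
  rw [mem_partOf]
  constructor
  · rintro ⟨hxa, hidx⟩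
    obtain ⟨j', hj'⟩ := coverB hS hxa
    have hkey := keyL hS hj'
    have : j' = j := Fin.ext (by omega)
    rwa [← this]
  · intro hx
    exact ⟨subB hS j hx, keyL hS hx⟩

end Inv2


/-- π ↦ w(π) is a bijection between standard type B partitions of
⟨n⟩ with 2k+1 blocks and SRGFs of length 2n+1 with maximal letter k. -/
theorem stmt12 (n k : ℕ) :
    Set.BijOn (wordOf n k) {S | IsStandardB n k S}
      {a : Fin (n+1) → ℤ | IsSRGF n a ∧ (∀ i, |a i| ≤ (k : ℤ)) ∧
        (∃ i, |a i| = (k : ℤ))} := by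
  have hmt1 : Set.MapsTo (wordOf n k) {S | IsStandardB n k S}
      {a : Fin (n+1) → ℤ | IsSRGF n a ∧ (∀ i, |a i| ≤ (k : ℤ)) ∧ (∃ i, |a i| = (k : ℤ))} :=
    fun S hS => ⟨word_srgf hS, word_abs_le hS, word_abs_exists hS⟩
  have hmt2 : Set.MapsTo (partOf n k)
      {a : Fin (n+1) → ℤ | IsSRGF n a ∧ (∀ i, |a i| ≤ (k : ℤ)) ∧ (∃ i, |a i| = (k : ℤ))}
      {S | IsStandardB n k S} :=
    fun a ha => partOf_standard ha.1 ha.2.1 ha.2.2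
  exact Set.InvOn.bijOn ⟨fun S hS => partOf_wordOf hS, fun a ha => word_partOf ha.1 ha.2.1⟩
    hmt1 hmt2
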